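/- Let S be a downwards-closed subtree of Ω having uncountably many infinite branches, and let Σ_S : ℓ¹(S) → ℓ∞(S) be the unique bounded linear operator with (Σ_S e_s)(t) = 1 if s ⊑ t and 0 otherwise. Then the range of the adjoint Σ_S* : (ℓ∞(S))* → (ℓ¹(S))* is not separable; in particular, Σ_S is not an Asplund operator. -/

import Mathlib

open TopologicalSpace

section Aux

open Filter Topology

/-- A fixed ultrafilter extending the cofinite filter on `ℕ`. -/
noncomputable def myU : Ultrafilter ℕ := Ultrafilter.of Filter.cofinite

lemma myU_le_cofinite : (myU : Filter ℕ) ≤ Filter.cofinite := Ultrafilter.of_le _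

/-- The initial segment of length `n` of a branch `b`. -/
def nodeL (b : ℕ → ℕ) (n : ℕ) : List ℕ := List.ofFn fun i : Fin n => b i

lemma length_nodeL (b : ℕ → ℕ) (n : ℕ) : (nodeL b n).length = n := by simp [nodeL]

lemma take_nodeL (b : ℕ → ℕ) {m n : ℕ} (h : m ≤ n) : (nodeL b n).take m = nodeL b m := by
  apply List.ext_getElem (by simp [nodeL, h]) ?_
  intro i h1 h2
  simp [nodeL]

lemma nodeL_prefix (b : ℕ → ℕ) {m n : ℕ} (h : m ≤ n) : nodeL b m <+: nodeL b n := by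
  rw [← take_nodeL b h]; exact List.take_prefix _ _

lemma eq_nodeL_of_prefix {b : ℕ → ℕ} {s : List ℕ} {n : ℕ} (h : s <+: nodeL b n) :
    s = nodeL b s.length := by
  have hl : s.length ≤ n := by simpa [nodeL] using h.length_le
  have h2 := List.prefix_iff_eq_take.mp h
  rw [take_nodeL b hl] at h2
  exact h2

lemma nodeL_ne_of_apply_ne {b b' : ℕ → ℕ} {k : ℕ} (h : b k ≠ b' k) :
    nodeL b (k + 1) ≠ nodeL b' (k + 1) := by
  intro he
  apply h
  have h1 : (nodeL b (k+1))[k]'(by simp [nodeL]) = b k := by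
    simp [nodeL, List.getElem_ofFn, -List.ofFn_succ]
  have h2 : (nodeL b' (k+1))[k]'(by simp [nodeL]) = b' k := by
    simp [nodeL, List.getElem_ofFn, -List.ofFn_succ]
  rw [← h1, ← h2]
  simp [he]

variable {α : Type*} (node : ℕ → α)

/-- The "limit along the nodes `node n` with respect to `myU`" function on `ℓ∞(α)`. -/
noncomputable def branchFun (x : lp (fun _ : α => ℝ) ⊤) : ℝ :=
  limUnder (myU : Filter ℕ) (fun n => x (node n))

lemma tendsto_branchFun (x : lp (fun _ : α => ℝ) ⊤) :
    Tendsto (fun n => x (node n)) (myU : Filter ℕ) (𝓝 (branchFun node x)) := by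
  have hb : ∀ n, (fun n => x (node n)) n ∈ Set.Icc (-‖x‖) ‖x‖ := by
    intro n
    have := lp.norm_apply_le_norm (E := fun _ : α => ℝ) ENNReal.top_ne_zero x (node n)
    rw [Real.norm_eq_abs, abs_le] at this
    exact this
  obtain ⟨l, -, hl⟩ := (isCompact_Icc (a := -‖x‖) (b := ‖x‖)).ultrafilter_le_nhds
    (myU.map fun n => x (node n))
    (by rw [Ultrafilter.coe_map, le_principal_iff, mem_map]; exact univ_mem' hb)
  have hl' : Tendsto (fun n => x (node n)) (myU : Filter ℕ) (𝓝 l) := by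
    rwa [Ultrafilter.coe_map] at hl
  rwa [branchFun, hl'.limUnder_eq]

/-- The "limit along a branch" functional on `ℓ∞(α)`. -/
noncomputable def branchDual : StrongDual ℝ (lp (fun _ : α => ℝ) ⊤) :=
  LinearMap.mkContinuous
    { toFun := branchFun node
      map_add' := fun x y => by
        refine tendsto_nhds_unique (tendsto_branchFun node (x + y)) ?_
        refine ((tendsto_branchFun node x).add (tendsto_branchFun node y)).congr fun n => ?_
        simp [lp.coeFn_add]
      map_smul' := fun c x => by
        refine tendsto_nhds_unique (tendsto_branchFun node (c • x)) ?_
        refine ((tendsto_branchFun node x).const_mul c).congr fun n => ?_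
        simp [lp.coeFn_smul] }
    1
    (fun x => by
      have hmem : branchFun node x ∈ Set.Icc (-‖x‖) ‖x‖ := by
        refine (isClosed_Icc).mem_of_tendsto (tendsto_branchFun node x) ?_
        filter_upwards with n
        have := lp.norm_apply_le_norm (E := fun _ : α => ℝ) ENNReal.top_ne_zero x (node n)
        rw [Real.norm_eq_abs, abs_le] at this
        exact this
      simp only [one_mul, LinearMap.coe_mk, AddHom.coe_mk, Real.norm_eq_abs]
      exact abs_le.mpr hmem)

lemma branchDual_apply (x : lp (fun _ : α => ℝ) ⊤) : branchDual node x = branchFun node x := rfl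

end Aux

/-- A downwards-closed subtree of the tree `Ω` of finite sequences of naturals. -/
def IsDownwardsClosedSubtree (S : Set (List ℕ)) : Prop :=
  ∀ t ∈ S, ∀ s : List ℕ, s <+: t → s ∈ S

/-- `b : ℕ → ℕ` is an infinite branch of `S` if all its finite initial segments lie in `S`. -/
def IsBranch (S : Set (List ℕ)) (b : ℕ → ℕ) : Prop :=
  ∀ n : ℕ, (List.ofFn fun i : Fin n => b i) ∈ S

/-- `T` is an Asplund operator if for every separable closed subspace `Z` of its domain,
the adjoint of the restriction `T ∘ ι_Z` has separable range in `Z*`. -/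
def IsAsplundOperator {X Y : Type*} [NormedAddCommGroup X] [NormedSpace ℝ X]
    [NormedAddCommGroup Y] [NormedSpace ℝ Y] (T : X →L[ℝ] Y) : Prop :=
  ∀ Z : Submodule ℝ X, IsClosed (Z : Set X) → SeparableSpace ↥Z →
    TopologicalSpace.IsSeparable
      (Set.range fun g : StrongDual ℝ Y => g.comp (T.comp Z.subtypeL))

noncomputable def eTop (X : Type*) [NormedAddCommGroup X] [NormedSpace ℝ X] :
    X →L[ℝ] ↥(⊤ : Submodule ℝ X) :=
  LinearMap.mkContinuous (Submodule.topEquiv (R := ℝ) (M := X)).symm.toLinearMap 1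
    (fun x => by simp [Submodule.coe_norm])

noncomputable def psiTop (X : Type*) [NormedAddCommGroup X] [NormedSpace ℝ X] :
    (↥(⊤ : Submodule ℝ X) →L[ℝ] ℝ) →L[ℝ] (X →L[ℝ] ℝ) :=
  (ContinuousLinearMap.compSL X ↥(⊤ : Submodule ℝ X) ℝ (RingHom.id ℝ) (RingHom.id ℝ)).flip
    (eTop X)

section Main

open Filter Topology

variable {S : Set (List ℕ)}

/-- The node of a branch as an element of `↥S`. -/
def branchNode (b : ℕ → ℕ) (hb : IsBranch S b) (n : ℕ) : ↥S := ⟨nodeL b n, hb n⟩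

lemma branchDual_sig (Sig : lp (fun _ : ↥S => ℝ) 1 →L[ℝ] lp (fun _ : ↥S => ℝ) ⊤)
    (hSig : ∀ s t : ↥S,
      (Sig (lp.single 1 s (1 : ℝ)) : ∀ _ : ↥S, ℝ) t =
        if (s : List ℕ) <+: (t : List ℕ) then 1 else 0)
    (b : ℕ → ℕ) (hb : IsBranch S b) (s : ↥S) :
    branchDual (branchNode b hb) (Sig (lp.single 1 s (1 : ℝ))) =
      if (s : List ℕ) = nodeL b (s : List ℕ).length then 1 else 0 := by
  set x := Sig (lp.single 1 s (1 : ℝ))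
  have hx : ∀ n, (x : ∀ _ : ↥S, ℝ) (branchNode b hb n) =
      if (s : List ℕ) <+: nodeL b n then 1 else 0 := fun n => hSig s (branchNode b hb n)
  by_cases hcase : (s : List ℕ) = nodeL b (s : List ℕ).length
  · rw [if_pos hcase]
    refine tendsto_nhds_unique (tendsto_branchFun (branchNode b hb) x) ?_
    refine Tendsto.congr' ?_ tendsto_const_nhds
    have hev : ∀ᶠ n in (myU : Filter ℕ), (s : List ℕ).length ≤ n := by
      apply myU_le_cofinite
      rw [Nat.cofinite_eq_atTop]
      exact eventually_ge_atTop _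
    filter_upwards [hev] with n hn
    rw [hx n, if_pos (hcase ▸ nodeL_prefix b hn)]
  · rw [if_neg hcase]
    refine tendsto_nhds_unique (tendsto_branchFun (branchNode b hb) x) ?_
    refine Tendsto.congr (fun n => ?_) tendsto_const_nhds
    rw [hx n, if_neg]
    intro hpre
    exact hcase (eq_nodeL_of_prefix hpre)

lemma branchDual_sep (Sig : lp (fun _ : ↥S => ℝ) 1 →L[ℝ] lp (fun _ : ↥S => ℝ) ⊤)
    (hSig : ∀ s t : ↥S,
      (Sig (lp.single 1 s (1 : ℝ)) : ∀ _ : ↥S, ℝ) t =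
        if (s : List ℕ) <+: (t : List ℕ) then 1 else 0)
    {b b' : ℕ → ℕ} (hb : IsBranch S b) (hb' : IsBranch S b') (hne : b ≠ b') :
    1 ≤ ‖(branchDual (branchNode b hb)).comp Sig -
          (branchDual (branchNode b' hb')).comp Sig‖ := by
  obtain ⟨k, hk⟩ := Function.ne_iff.mp hne
  set s : ↥S := ⟨nodeL b (k + 1), hb (k + 1)⟩ with hs
  have h1 : branchDual (branchNode b hb) (Sig (lp.single 1 s (1 : ℝ))) = 1 := by
    rw [branchDual_sig Sig hSig b hb s, if_pos]
    simp [hs, length_nodeL]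
  have h2 : branchDual (branchNode b' hb') (Sig (lp.single 1 s (1 : ℝ))) = 0 := by
    rw [branchDual_sig Sig hSig b' hb' s, if_neg]
    simp only [hs, length_nodeL]
    exact nodeL_ne_of_apply_ne hk
  have hns : ‖lp.single (E := fun _ : ↥S => ℝ) 1 s (1 : ℝ)‖ = 1 := by
    have := lp.norm_single (p := 1) (E := fun _ : ↥S => ℝ) (by norm_num) s (1 : ℝ)
    simpa using this
  have := ((branchDual (branchNode b hb)).comp Sig -
      (branchDual (branchNode b' hb')).comp Sig).le_opNorm (lp.single 1 s (1 : ℝ))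
  rw [hns, mul_one] at this
  refine le_trans ?_ this
  rw [ContinuousLinearMap.sub_apply, ContinuousLinearMap.comp_apply,
    ContinuousLinearMap.comp_apply, h1, h2, sub_zero, norm_one]

lemma lp_one_separable {α : Type*} [Countable α] [DecidableEq α] : SeparableSpace (lp (fun _ : α => ℝ) 1) := by
  set D : Submodule ℝ (lp (fun _ : α => ℝ) 1) :=
    Submodule.span ℝ (Set.range fun i : α => lp.single 1 i (1 : ℝ)) with hD
  have hsep : IsSeparable (D : Set (lp (fun _ : α => ℝ) 1)) :=
    (Set.countable_range _).isSeparable.span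
  have hdense : ∀ f : lp (fun _ : α => ℝ) 1, f ∈ closure (D : Set (lp (fun _ : α => ℝ) 1)) := by
    intro f
    have hsum : HasSum (fun i : α => lp.single 1 i (f i : ℝ)) f :=
      lp.hasSum_single (by norm_num) f
    refine mem_closure_of_tendsto hsum ?_
    filter_upwards with t
    refine Submodule.sum_mem _ fun i _ => ?_
    have : lp.single (E := fun _ : α => ℝ) 1 i (f i : ℝ) = (f i : ℝ) • lp.single (E := fun _ : α => ℝ) 1 i (1 : ℝ) := by
      rw [← lp.single_smul, smul_eq_mul, mul_one]
    rw [this]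
    exact Submodule.smul_mem _ _ (Submodule.subset_span (Set.mem_range_self i))
  refine isSeparable_univ_iff.mp ?_
  exact (hsep.closure).mono fun f _ => hdense f

end Main

section Thm

open Filter Topology

theorem stmt6 (S : Set (List ℕ)) (hS : IsDownwardsClosedSubtree S)
    (hbr : ¬ {b : ℕ → ℕ | IsBranch S b}.Countable)
    (Sig : lp (fun _ : ↥S => ℝ) 1 →L[ℝ] lp (fun _ : ↥S => ℝ) ⊤)
    (hSig : ∀ s t : ↥S,
      (Sig (lp.single 1 s (1 : ℝ)) : ∀ _ : ↥S, ℝ) t =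
        if (s : List ℕ) <+: (t : List ℕ) then 1 else 0) :
    ¬ TopologicalSpace.IsSeparable
        (Set.range fun g : StrongDual ℝ (lp (fun _ : ↥S => ℝ) ⊤) => g.comp Sig) ∧
      ¬ IsAsplundOperator Sig := by
  have key : ¬ TopologicalSpace.IsSeparable
      (Set.range fun g : StrongDual ℝ (lp (fun _ : ↥S => ℝ) ⊤) => g.comp Sig) := by
    rintro ⟨c, hc, hsub⟩
    set B := {b : ℕ → ℕ | IsBranch S b}
    set F : ↥B → (lp (fun _ : ↥S => ℝ) 1 →L[ℝ] ℝ) :=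
      fun b => (branchDual (branchNode b.1 b.2)).comp Sig with hF
    have hFmem : ∀ b : ↥B, F b ∈ closure c := fun b =>
      hsub (Set.mem_range_self (branchDual (branchNode b.1 b.2)))
    have hchoice : ∀ b : ↥B, ∃ y ∈ c, dist (F b) y < 1/2 := fun b =>
      Metric.mem_closure_iff.mp (hFmem b) (1/2) (by norm_num)
    choose φ hφc hφd using hchoice
    have hinj : Function.Injective fun b : ↥B => (⟨φ b, hφc b⟩ : ↥c) := by
      intro b b' he
      simp only [Subtype.mk.injEq] at he
      by_contra hne
      have hne' : b.1 ≠ b'.1 := fun h => hne (Subtype.ext h)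
      have hsep := branchDual_sep Sig hSig b.2 b'.2 hne'
      have : dist (F b) (F b') < 1 := by
        calc dist (F b) (F b') ≤ dist (F b) (φ b) + dist (φ b') (F b') := by
              rw [he]; exact dist_triangle _ _ _
          _ < 1/2 + 1/2 := by
              have := hφd b'
              rw [dist_comm] at this
              exact add_lt_add (hφd b) this
          _ = 1 := by norm_num
      rw [dist_eq_norm] at this
      exact absurd hsep (not_le.mpr this)
    haveI : Countable ↥c := hc.to_subtype
    haveI : Countable ↥B := hinj.countable
    exact hbr (Set.countable_coe_iff.mpr ‹Countable ↥B›)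
  refine ⟨key, fun hAsp => ?_⟩
  haveI : Countable ↥S := Subtype.countable
  haveI hsepX : SeparableSpace (lp (fun _ : ↥S => ℝ) 1) := lp_one_separable
  -- apply the Asplund property with `Z = ⊤`
  have htop_closed : IsClosed ((⊤ : Submodule ℝ (lp (fun _ : ↥S => ℝ) 1)) :
      Set (lp (fun _ : ↥S => ℝ) 1)) := by
    rw [Submodule.top_coe]; exact isClosed_univ
  have htop_sep : SeparableSpace ↥(⊤ : Submodule ℝ (lp (fun _ : ↥S => ℝ) 1)) := by
    have : IsSeparable ((⊤ : Submodule ℝ (lp (fun _ : ↥S => ℝ) 1)) :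
        Set (lp (fun _ : ↥S => ℝ) 1)) := by
      rw [Submodule.top_coe]
      exact IsSeparable.of_separableSpace _
    exact this.separableSpace
  have hB := hAsp ⊤ htop_closed htop_sep
  -- transfer separability back
  set X := lp (fun _ : ↥S => ℝ) 1 with hX
  have himg : (Set.range fun g : StrongDual ℝ (lp (fun _ : ↥S => ℝ) ⊤) => g.comp Sig) ⊆
      (psiTop X) '' (Set.range fun g : StrongDual ℝ (lp (fun _ : ↥S => ℝ) ⊤) =>
        g.comp (Sig.comp (⊤ : Submodule ℝ X).subtypeL)) := by
    rintro - ⟨g, rfl⟩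
    refine ⟨g.comp (Sig.comp (⊤ : Submodule ℝ X).subtypeL), Set.mem_range_self g, ?_⟩
    ext x
    rfl
  exact key ((hB.image (psiTop X).continuous).mono himg)

end Thm
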